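/- Let P ⊂ ℝ^D be a finite set of n points and f : ℝ^D → ℝ^d linear with (1−ε)‖x−y‖ ≤ ‖f(x)−f(y)‖ ≤ (1+ε)‖x−y‖ for all x,y ∈ P. Assign weights w(p) = −d²_{P,k}(p) to each p ∈ P and the recomputed weights w(f(p)) = −d²_{f(P),k}(f(p)) to image points. Let σ̂ ⊆ P̂ be any subset of these weighted points. Then (1−ε)²·rad²(σ̂) ≤ rad²(f(σ)^) ≤ (1+ε)²·rad²(σ̂). -/

import Mathlib

open Finset

/-- The squared `k`-distance of `x` to the point family `p`. -/
noncomputable def kDist2 {n : ℕ} {E : Type*} [NormedAddCommGroup E]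
    (p : Fin n → E) (k : ℕ) (hk : k ≤ n) (x : E) : ℝ :=
  ((Finset.univ : Finset (Fin n)).powersetCard k).inf'
    (Finset.powersetCard_nonempty.mpr (by simpa using hk))
    (fun S => (1 / (k : ℝ)) * ∑ i ∈ S, ‖x - p i‖ ^ 2)

/-- The squared radius of a nonempty finite family of weighted points:
the infimum over centers of the maximum power distance. -/
noncomputable def rad2On {E : Type*} [NormedAddCommGroup E] {ι : Type*}
    (σ : Finset ι) (hσ : σ.Nonempty) (p : ι → E) (w : ι → ℝ) : ℝ :=
  ⨅ x : E, σ.sup' hσ (fun i => ‖x - p i‖ ^ 2 - w i)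

set_option linter.unusedSectionVars false
section Core
variable {E : Type*} [NormedAddCommGroup E] [InnerProductSpace ℝ E]
variable {ι : Type*} [Fintype ι] [Nonempty ι]

noncomputable def Qf (p : ι → E) (s : ι → ℝ) (l : ι → ℝ) : ℝ :=
  (1/2) * ∑ i, ∑ j, l i * l j * ‖p i - p j‖^2 + ∑ i, l i * s i

lemma normc_eq (p : ι → E) (l : ι → ℝ) :
    ‖∑ i, l i • p i‖^2 = ∑ i, ∑ j, l i * l j * (inner ℝ (p i) (p j) : ℝ) := by
  rw [← real_inner_self_eq_norm_sq, sum_inner]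
  refine Finset.sum_congr rfl fun i _ => ?_
  rw [real_inner_smul_left, inner_sum, Finset.mul_sum]
  refine Finset.sum_congr rfl fun j _ => ?_
  rw [real_inner_smul_right]; ring

lemma L0 (p : ι → E) (s : ι → ℝ) {l : ι → ℝ} (hl : ∑ i, l i = 1) :
    Qf p s l = ∑ i, l i * (s i + ‖p i‖^2) - ‖∑ i, l i • p i‖^2 := by
  have expand : ∀ i j : ι, l i * l j * ‖p i - p j‖^2
      = l i * l j * ‖p i‖^2 + l i * l j * ‖p j‖^2 - 2*(l i * l j * (inner ℝ (p i) (p j) : ℝ)) := by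
    intro i j; rw [norm_sub_sq_real]; ring
  have T1 : ∑ i : ι, ∑ j : ι, l i * l j * ‖p i‖^2 = ∑ i, l i * ‖p i‖^2 := by
    refine Finset.sum_congr rfl fun i _ => ?_
    have : ∀ j : ι, l i * l j * ‖p i‖^2 = l j * (l i * ‖p i‖^2) := fun j => by ring
    simp_rw [this, ← Finset.sum_mul, hl, one_mul]
  have T2 : ∑ i : ι, ∑ j : ι, l i * l j * ‖p j‖^2 = ∑ j, l j * ‖p j‖^2 := by
    rw [Finset.sum_comm]
    refine Finset.sum_congr rfl fun j _ => ?_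
    have : ∀ i : ι, l i * l j * ‖p j‖^2 = l i * (l j * ‖p j‖^2) := fun i => by ring
    simp_rw [this, ← Finset.sum_mul, hl, one_mul]
  have T3 := normc_eq p l
  rw [Qf]
  simp_rw [expand, Finset.sum_sub_distrib, Finset.sum_add_distrib, ← Finset.mul_sum]
  rw [T1, T2, ← T3]
  simp_rw [mul_add, Finset.sum_add_distrib]
  ring

lemma Lmain (p : ι → E) (s : ι → ℝ) {l : ι → ℝ} (hl : ∑ i, l i = 1) (x : E) :
    ∑ i, l i * (‖x - p i‖^2 + s i) = Qf p s l + ‖x - ∑ i, l i • p i‖^2 := by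
  rw [L0 p s hl]
  have h1 : ∀ i, l i * (‖x - p i‖^2 + s i)
      = l i * (‖x‖^2) - 2 * (l i * (inner ℝ x (p i) : ℝ)) + l i * (s i + ‖p i‖^2) := by
    intro i; rw [norm_sub_sq_real]; ring
  have h2 : ‖x - ∑ i, l i • p i‖^2
      = ‖x‖^2 - 2 * ∑ i, l i * (inner ℝ x (p i) : ℝ) + ‖∑ i, l i • p i‖^2 := by
    rw [norm_sub_sq_real, inner_sum]
    simp_rw [real_inner_smul_right]
  simp_rw [h1, Finset.sum_add_distrib, Finset.sum_sub_distrib, ← Finset.mul_sum,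
    ← Finset.sum_mul, hl, one_mul, h2]
  ring
end Core

section Dual
variable {E : Type*} [NormedAddCommGroup E] [InnerProductSpace ℝ E]
variable {ι : Type*} [Fintype ι] [Nonempty ι]

lemma weakCore (p : ι → E) (s : ι → ℝ) {l : ι → ℝ} (hl : l ∈ stdSimplex ℝ ι) (x : E) :
    Qf p s l ≤ (univ : Finset ι).sup' univ_nonempty (fun i => ‖x - p i‖^2 + s i) := by
  have h1 : Qf p s l ≤ ∑ i, l i * (‖x - p i‖^2 + s i) := by
    rw [Lmain p s hl.2 x]
    nlinarith [sq_nonneg ‖x - ∑ i, l i • p i‖]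
  refine h1.trans ?_
  calc ∑ i, l i * (‖x - p i‖^2 + s i)
      ≤ ∑ i, l i * ((univ : Finset ι).sup' univ_nonempty (fun i => ‖x - p i‖^2 + s i)) := by
        refine Finset.sum_le_sum fun i _ => mul_le_mul_of_nonneg_left ?_ (hl.1 i)
        exact Finset.le_sup' (fun i => ‖x - p i‖^2 + s i) (Finset.mem_univ i)
    _ = _ := by rw [← Finset.sum_mul, hl.2, one_mul]

lemma strongCore (p : ι → E) (s : ι → ℝ) :
    ∃ l ∈ stdSimplex ℝ ι, ∀ i, ‖(∑ j, l j • p j) - p i‖^2 + s i ≤ Qf p s l := by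
  classical
  obtain ⟨i0⟩ := ‹Nonempty ι›
  have hne : (stdSimplex ℝ ι).Nonempty := by
    refine ⟨fun j => if j = i0 then 1 else 0, fun j => by positivity, ?_⟩
    simp
  have hcont : ContinuousOn (Qf p s) (stdSimplex ℝ ι) := by
    apply Continuous.continuousOn
    apply Continuous.add
    · exact continuous_const.mul (continuous_finset_sum _ fun i _ =>
        continuous_finset_sum _ fun j _ =>
          (((continuous_apply i).mul (continuous_apply j)).mul continuous_const))
    · exact continuous_finset_sum _ fun i _ => (continuous_apply i).mul continuous_const
  obtain ⟨l, hlS, hmax⟩ := (isCompact_stdSimplex ℝ ι).exists_isMaxOn hne hcont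
  refine ⟨l, hlS, fun i => ?_⟩
  set c := ∑ j, l j • p j with hc
  set A := ∑ j, l j * (s j + ‖p j‖^2) with hA
  have hQl : Qf p s l = A - ‖c‖^2 := L0 p s hlS.2
  -- perturbation
  have key : ∀ t : ℝ, 0 < t → t ≤ 1 →
      (‖c - p i‖^2 + s i) - Qf p s l ≤ t * ‖p i - c‖^2 := by
    intro t htpos ht1
    have ht0 : (0:ℝ) ≤ t := le_of_lt htpos
    set μ : ι → ℝ := fun j => (1 - t) * l j + t * (if j = i then 1 else 0) with hμ
    have hμS : μ ∈ stdSimplex ℝ ι := by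
      constructor
      · intro j
        have := hlS.1 j
        dsimp [μ]
        have : (0:ℝ) ≤ (1-t) * l j := mul_nonneg (by linarith) (hlS.1 j)
        split <;> nlinarith
      · simp only [μ, Finset.sum_add_distrib, ← Finset.mul_sum, hlS.2]
        simp
    have hQμ : Qf p s μ ≤ Qf p s l := hmax hμS
    have hAμ : ∑ j, μ j * (s j + ‖p j‖^2) = (1 - t) * A + t * (s i + ‖p i‖^2) := by
      have h : ∀ j : ι, μ j * (s j + ‖p j‖^2)
          = (1-t) * (l j * (s j + ‖p j‖^2)) + t * (if j = i then s j + ‖p j‖^2 else 0) := by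
        intro j; dsimp only [μ]; split <;> ring
      rw [Finset.sum_congr rfl fun j _ => h j, Finset.sum_add_distrib,
        ← Finset.mul_sum, ← Finset.mul_sum, ← hA,
        Finset.sum_ite_eq' univ i (fun j => s j + ‖p j‖^2), if_pos (Finset.mem_univ i)]
    have hcμ : ∑ j, μ j • p j = (1 - t) • c + t • p i := by
      have h : ∀ j : ι, μ j • p j
          = (1-t) • (l j • p j) + t • (if j = i then p j else 0) := by
        intro j
        by_cases hji : j = i <;> simp [μ, hji, add_smul, mul_smul]
      rw [Finset.sum_congr rfl fun j _ => h j, Finset.sum_add_distrib,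
        ← Finset.smul_sum, ← Finset.smul_sum, ← hc,
        Finset.sum_ite_eq' univ i p, if_pos (Finset.mem_univ i)]
    have hQμval : Qf p s μ = (1 - t) * A + t * (s i + ‖p i‖^2)
        - ‖(1 - t) • c + t • p i‖^2 := by
      rw [L0 p s hμS.2, hAμ, hcμ]
    have hnorm : ‖(1 - t) • c + t • p i‖^2
        = (1-t)^2 * ‖c‖^2 + 2 * ((1-t)*t*(inner ℝ c (p i) : ℝ)) + t^2 * ‖p i‖^2 := by
      rw [norm_add_sq_real, real_inner_smul_left, real_inner_smul_right,
        norm_smul, norm_smul, mul_pow, mul_pow]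
      simp [Real.norm_eq_abs, sq_abs]
      ring
    have e1 : ‖c - p i‖^2 = ‖c‖^2 - 2*(inner ℝ c (p i) : ℝ) + ‖p i‖^2 := norm_sub_sq_real c (p i)
    have e2 : ‖p i - c‖^2 = ‖p i‖^2 - 2*(inner ℝ (p i) c : ℝ) + ‖c‖^2 := norm_sub_sq_real (p i) c
    have e3 : (inner ℝ (p i) c : ℝ) = (inner ℝ c (p i) : ℝ) := real_inner_comm _ _
    rw [hQμval, hnorm, hQl] at hQμ
    rw [e1, hQl, e2, e3]
    have h4 : t * ((‖c‖^2 - 2*(inner ℝ c (p i):ℝ) + ‖p i‖^2 + s i) - (A - ‖c‖^2))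
        ≤ t * (t * (‖p i‖^2 - 2*(inner ℝ c (p i):ℝ) + ‖c‖^2)) := by nlinarith [hQμ]
    exact le_of_mul_le_mul_left (by linarith [h4]) htpos
  -- conclude
  by_contra hcon
  push_neg at hcon
  set a := (‖c - p i‖^2 + s i) - Qf p s l with ha
  have ha0 : 0 < a := by dsimp [a]; linarith
  set B := ‖p i - c‖^2 with hB
  have hB0 : (0:ℝ) ≤ B := by positivity
  have htval := key (min 1 (a / (2*B + 1))) (lt_min one_pos (by positivity)) (min_le_left _ _)
  have h2 : min 1 (a / (2*B + 1)) ≤ a / (2*B+1) := min_le_right _ _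
  have h3 : (0:ℝ) < 2*B+1 := by linarith
  rw [le_div_iff₀ h3] at h2
  nlinarith [htval, mul_le_mul_of_nonneg_right h2 hB0]
end Dual

section Transfer
variable {E : Type*} [NormedAddCommGroup E] [InnerProductSpace ℝ E]
variable {E' : Type*} [NormedAddCommGroup E'] [InnerProductSpace ℝ E']
variable {ι : Type*} [Fintype ι] [Nonempty ι]

lemma transfer (p : ι → E) (p' : ι → E') (s s' : ι → ℝ)
    (hs : ∀ i, 0 ≤ s i) (hs' : ∀ i, 0 ≤ s' i) (K : ℝ) (hK : 0 ≤ K)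
    (hpp : ∀ i j, ‖p' i - p' j‖^2 ≤ K * ‖p i - p j‖^2)
    (hss : ∀ i, s' i ≤ K * s i) :
    (⨅ x : E', (univ : Finset ι).sup' univ_nonempty (fun i => ‖x - p' i‖^2 + s' i))
      ≤ K * ⨅ x : E, (univ : Finset ι).sup' univ_nonempty (fun i => ‖x - p i‖^2 + s i) := by
  obtain ⟨l, hlS, hstr⟩ := strongCore p' s'
  obtain ⟨i0⟩ := ‹Nonempty ι›
  have bdd' : BddBelow (Set.range fun x : E' =>
      (univ : Finset ι).sup' univ_nonempty (fun i => ‖x - p' i‖^2 + s' i)) := by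
    refine ⟨0, ?_⟩
    rintro _ ⟨x, rfl⟩
    refine le_trans ?_ (Finset.le_sup' (fun i => ‖x - p' i‖^2 + s' i) (Finset.mem_univ i0))
    have := hs' i0; positivity
  have h1 : (⨅ x : E', (univ : Finset ι).sup' univ_nonempty (fun i => ‖x - p' i‖^2 + s' i))
      ≤ Qf p' s' l := by
    refine (ciInf_le bdd' (∑ j, l j • p' j)).trans ?_
    exact Finset.sup'_le _ _ fun i _ => hstr i
  have h2 : Qf p' s' l ≤ K * Qf p s l := by
    rw [Qf, Qf]
    have hS : ∑ i, ∑ j, l i * l j * ‖p' i - p' j‖^2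
        ≤ ∑ i, ∑ j, K * (l i * l j * ‖p i - p j‖^2) := by
      refine Finset.sum_le_sum fun i _ => Finset.sum_le_sum fun j _ => ?_
      calc l i * l j * ‖p' i - p' j‖^2
          ≤ l i * l j * (K * ‖p i - p j‖^2) :=
            mul_le_mul_of_nonneg_left (hpp i j) (mul_nonneg (hlS.1 i) (hlS.1 j))
        _ = K * (l i * l j * ‖p i - p j‖^2) := by ring
    have hT : ∑ i, l i * s' i ≤ ∑ i, K * (l i * s i) := by
      refine Finset.sum_le_sum fun i _ => ?_
      calc l i * s' i ≤ l i * (K * s i) := mul_le_mul_of_nonneg_left (hss i) (hlS.1 i)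
        _ = K * (l i * s i) := by ring
    simp_rw [← Finset.mul_sum] at hS hT
    nlinarith [hS, hT]
  have h3 : Qf p s l ≤ ⨅ x : E, (univ : Finset ι).sup' univ_nonempty
      (fun i => ‖x - p i‖^2 + s i) :=
    le_ciInf fun x => weakCore p s hlS x
  exact h1.trans (h2.trans (mul_le_mul_of_nonneg_left h3 hK))
end Transfer

section KD
variable {n : ℕ} {E : Type*} [NormedAddCommGroup E] {E' : Type*} [NormedAddCommGroup E']

lemma kDist2_nonneg (p : Fin n → E) (k : ℕ) (hk : k ≤ n) (x : E) : 0 ≤ kDist2 p k hk x := by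
  rw [kDist2]
  refine Finset.le_inf' _ _ fun S hS => ?_
  positivity

lemma kDist2_compare (p : Fin n → E) (q : Fin n → E') (k : ℕ) (hk : k ≤ n) (i : Fin n)
    (K : ℝ) (hK : 0 ≤ K) (h : ∀ j, ‖q i - q j‖^2 ≤ K * ‖p i - p j‖^2) :
    kDist2 q k hk (q i) ≤ K * kDist2 p k hk (p i) := by
  rw [kDist2, kDist2]
  obtain ⟨S, hS, hEq⟩ := Finset.exists_mem_eq_inf'
    (s := (Finset.univ : Finset (Fin n)).powersetCard k)
    (Finset.powersetCard_nonempty.mpr (by simpa using hk))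
    (fun S => (1 / (k : ℝ)) * ∑ j ∈ S, ‖p i - p j‖ ^ 2)
  rw [hEq]
  refine (Finset.inf'_le _ hS).trans ?_
  calc (1 / (k : ℝ)) * ∑ j ∈ S, ‖q i - q j‖^2
      ≤ (1 / (k : ℝ)) * ∑ j ∈ S, K * ‖p i - p j‖^2 :=
        mul_le_mul_of_nonneg_left (Finset.sum_le_sum fun j _ => h j) (by positivity)
    _ = K * ((1 / (k : ℝ)) * ∑ j ∈ S, ‖p i - p j‖^2) := by rw [← Finset.mul_sum]; ring
end KD

lemma sup'_subtype {α β : Type*} [SemilatticeSup β] (σ : Finset α) (hσ : σ.Nonempty)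
    [Nonempty {i // i ∈ σ}] (g : α → β) :
    σ.sup' hσ g = (univ : Finset {i // i ∈ σ}).sup' univ_nonempty (fun i => g i.1) := by
  apply le_antisymm
  · refine Finset.sup'_le _ _ fun i hi => ?_
    exact Finset.le_sup' (fun i : {x // x ∈ σ} => g i.1) (Finset.mem_univ ⟨i, hi⟩)
  · exact Finset.sup'_le _ _ fun i _ => Finset.le_sup' g i.2

theorem stmt_13 {D d n k : ℕ} (hk0 : 0 < k) (hk : k ≤ n)
    (ε : ℝ) (hε0 : 0 < ε) (hε1 : ε < 1)
    (p : Fin n → EuclideanSpace ℝ (Fin D))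
    (f : EuclideanSpace ℝ (Fin D) →ₗ[ℝ] EuclideanSpace ℝ (Fin d))
    (hf : ∀ i j : Fin n,
      (1 - ε) * ‖p i - p j‖ ≤ ‖f (p i) - f (p j)‖ ∧
      ‖f (p i) - f (p j)‖ ≤ (1 + ε) * ‖p i - p j‖)
    (σ : Finset (Fin n)) (hσ : σ.Nonempty) :
    (1 - ε) ^ 2 * rad2On σ hσ p (fun i => -kDist2 p k hk (p i)) ≤
      rad2On σ hσ (fun i => f (p i)) (fun i => -kDist2 (fun l => f (p l)) k hk (f (p i))) ∧
    rad2On σ hσ (fun i => f (p i)) (fun i => -kDist2 (fun l => f (p l)) k hk (f (p i))) ≤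
      (1 + ε) ^ 2 * rad2On σ hσ p (fun i => -kDist2 p k hk (p i)) := by
  haveI : Nonempty {i // i ∈ σ} := ⟨⟨hσ.choose, hσ.choose_spec⟩⟩
  set q : Fin n → EuclideanSpace ℝ (Fin d) := fun l => f (p l) with hq
  set s : Fin n → ℝ := fun i => kDist2 p k hk (p i) with hsdef
  set s' : Fin n → ℝ := fun i => kDist2 q k hk (q i) with hsdef'
  have hε1' : (0:ℝ) < 1 - ε := by linarith
  -- squared norm comparisons
  have hup : ∀ i j : Fin n, ‖q i - q j‖^2 ≤ (1+ε)^2 * ‖p i - p j‖^2 := by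
    intro i j
    have h := (hf i j).2
    calc ‖q i - q j‖^2 ≤ ((1+ε) * ‖p i - p j‖)^2 :=
          pow_le_pow_left₀ (norm_nonneg _) h 2
      _ = (1+ε)^2 * ‖p i - p j‖^2 := by ring
  have hdown : ∀ i j : Fin n, ‖p i - p j‖^2 ≤ ((1-ε)^2)⁻¹ * ‖q i - q j‖^2 := by
    intro i j
    have h := (hf i j).1
    have h2 : ((1-ε) * ‖p i - p j‖)^2 ≤ ‖q i - q j‖^2 :=
      pow_le_pow_left₀ (by positivity) h 2
    have h3 : (1-ε)^2 * ‖p i - p j‖^2 ≤ ‖q i - q j‖^2 := by nlinarith [h2]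
    have h4 : ((1-ε)^2)⁻¹ * ((1-ε)^2 * ‖p i - p j‖^2) ≤ ((1-ε)^2)⁻¹ * ‖q i - q j‖^2 :=
      mul_le_mul_of_nonneg_left h3 (by positivity)
    calc ‖p i - p j‖^2 = ((1-ε)^2)⁻¹ * ((1-ε)^2 * ‖p i - p j‖^2) := by
          field_simp
      _ ≤ _ := h4
  -- kDist2 comparisons
  have hs : ∀ i : Fin n, 0 ≤ s i := fun i => kDist2_nonneg p k hk (p i)
  have hs' : ∀ i : Fin n, 0 ≤ s' i := fun i => kDist2_nonneg q k hk (q i)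
  have hsup : ∀ i : Fin n, s' i ≤ (1+ε)^2 * s i := fun i =>
    kDist2_compare p q k hk i _ (by positivity) (fun j => hup i j)
  have hsdown : ∀ i : Fin n, s i ≤ ((1-ε)^2)⁻¹ * s' i := fun i =>
    kDist2_compare q p k hk i _ (by positivity) (fun j => hdown i j)
  -- rewrite rad2On as inf over subtype sup'
  have hR : rad2On σ hσ p (fun i => -s i)
      = ⨅ x : EuclideanSpace ℝ (Fin D), (univ : Finset {i // i ∈ σ}).sup' univ_nonempty
          (fun i => ‖x - p i.1‖^2 + s i.1) := by
    rw [rad2On]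
    refine iInf_congr fun x => ?_
    rw [sup'_subtype σ hσ (fun i => ‖x - p i‖ ^ 2 - -s i)]
    simp only [sub_neg_eq_add]
  have hR' : rad2On σ hσ q (fun i => -s' i)
      = ⨅ x : EuclideanSpace ℝ (Fin d), (univ : Finset {i // i ∈ σ}).sup' univ_nonempty
          (fun i => ‖x - q i.1‖^2 + s' i.1) := by
    rw [rad2On]
    refine iInf_congr fun x => ?_
    rw [sup'_subtype σ hσ (fun i => ‖x - q i‖ ^ 2 - -s' i)]
    simp only [sub_neg_eq_add]
  have hupper : rad2On σ hσ q (fun i => -s' i) ≤ (1+ε)^2 * rad2On σ hσ p (fun i => -s i) := by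
    rw [hR, hR']
    exact transfer (fun i : {i // i ∈ σ} => p i.1) (fun i => q i.1)
      (fun i => s i.1) (fun i => s' i.1) (fun i => hs i.1) (fun i => hs' i.1)
      ((1+ε)^2) (by positivity) (fun i j => hup i.1 j.1) (fun i => hsup i.1)
  have hlower0 : rad2On σ hσ p (fun i => -s i)
      ≤ ((1-ε)^2)⁻¹ * rad2On σ hσ q (fun i => -s' i) := by
    rw [hR, hR']
    exact transfer (fun i : {i // i ∈ σ} => q i.1) (fun i => p i.1)
      (fun i => s' i.1) (fun i => s i.1) (fun i => hs' i.1) (fun i => hs i.1)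
      (((1-ε)^2)⁻¹) (by positivity) (fun i j => hdown i.1 j.1) (fun i => hsdown i.1)
  have hlower : (1-ε)^2 * rad2On σ hσ p (fun i => -s i) ≤ rad2On σ hσ q (fun i => -s' i) := by
    have := mul_le_mul_of_nonneg_left hlower0 (le_of_lt (by positivity : (0:ℝ) < (1-ε)^2))
    calc (1-ε)^2 * rad2On σ hσ p (fun i => -s i)
        ≤ (1-ε)^2 * (((1-ε)^2)⁻¹ * rad2On σ hσ q (fun i => -s' i)) := this
      _ = rad2On σ hσ q (fun i => -s' i) := by
          rw [← mul_assoc, mul_inv_cancel₀ (by positivity), one_mul]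
  exact ⟨hlower, hupper⟩
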